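/- arXiv:1909.11955 — 4 statements merged into one kernel-verified Lean document; each statement's English description precedes it below -/
import Mathlib

section
/- For any fixed (w,s) ∈ ℂ* × ℝ, the left translation L_{(w,s)}(z,t) = (wz, s + t|w|²) pulls back the 1-form ω* = (dt + 2 Im(z̄ dz)) / (2|z|²) to itself: L_{(w,s)}* ω* = ω*. -/
/-- Evaluation of the contact form ω* = (dt + 2 Im(z̄ dz))/(2|z|²) at a point with
first coordinate z on the tangent vector (v, τ) ∈ ℂ × ℝ. -/
noncomputable def omegaStar (z v : ℂ) (τ : ℝ) : ℝ :=
  (τ + 2 * (star z * v).im) / (2 * ‖z‖ ^ 2)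

/-- Left translation L_{(w,s)}(z,t) = (wz, s + t|w|²). -/
noncomputable def Ltrans (w : ℂ) (s : ℝ) (p : ℂ × ℝ) : ℂ × ℝ :=
  (w * p.1, s + p.2 * ‖w‖ ^ 2)

lemma ltrans_fderiv (w : ℂ) (s : ℝ) (p u : ℂ × ℝ) :
    fderiv ℝ (Ltrans w s) p u = (w * u.1, u.2 * ‖w‖ ^ 2) := by
  have h1 : HasFDerivAt (fun p : ℂ × ℝ => w * p.1)
      ((ContinuousLinearMap.mul ℝ ℂ w).comp (ContinuousLinearMap.fst ℝ ℂ ℝ)) p :=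
    ((ContinuousLinearMap.mul ℝ ℂ w).hasFDerivAt.comp p (hasFDerivAt_fst))
  have h2 : HasFDerivAt (fun p : ℂ × ℝ => s + p.2 * ‖w‖ ^ 2)
      ((‖w‖ ^ 2 : ℝ) • (ContinuousLinearMap.snd ℝ ℂ ℝ)) p := by
    have := (hasFDerivAt_snd (𝕜 := ℝ) (E := ℂ) (F := ℝ) (p := p)).mul_const
      (‖w‖ ^ 2)
    exact this.const_add s
  have h := (h1.prodMk h2).fderiv
  rw [show Ltrans w s = fun p : ℂ × ℝ => (w * p.1, s + p.2 * ‖w‖ ^ 2) from rfl, h]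
  simp [mul_comm]

/-- Left translations pull back ω* to itself: for every tangent vector u at p,
ω*_{L p}((DL)_p u) = ω*_p(u). -/
theorem stmt_6 :
    ∀ (w : ℂ) (s : ℝ), w ≠ 0 → ∀ p : ℂ × ℝ, p.1 ≠ 0 → ∀ u : ℂ × ℝ,
      omegaStar (Ltrans w s p).1
        (fderiv ℝ (Ltrans w s) p u).1 (fderiv ℝ (Ltrans w s) p u).2 =
      omegaStar p.1 u.1 u.2 := by
  intro w s hw p hp u
  rw [ltrans_fderiv]
  have hw2 : ‖w‖ ^ 2 ≠ 0 := pow_ne_zero 2 ((norm_ne_zero_iff.mpr hw))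
  simp only [omegaStar, Ltrans]
  have him : (star (w * p.1) * (w * u.1)).im = ‖w‖ ^ 2 * (star p.1 * u.1).im := by
    have h : star (w * p.1) * (w * u.1) = (star w * w) * (star p.1 * u.1) := by
      rw [star_mul']; ring
    rw [h, Complex.star_def, Complex.conj_mul']
    simp [← Complex.ofReal_pow, Complex.mul_im, Complex.sq_norm, Complex.normSq_apply]
  have hwa : ‖w‖ ≠ 0 := (norm_ne_zero_iff.mpr hw)
  have ha : ‖p.1‖ ≠ 0 := (norm_ne_zero_iff.mpr hp)
  rw [him, norm_mul, mul_pow]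
  field_simp
end

section
/- The Korányi map α(z,t) = −|z|² + it from ℂ* × ℝ to the left half-plane 𝓛 = {ζ : Re ζ < 0} pulls back the hyperbolic metric g_h = |dζ|²/(4 Re(ζ)²) to the tensor g*_cc = ((d(|z|²))² + dt²)/(4|z|⁴); equivalently, the differential of α sends 𝐗 ↦ Ξ and 𝐘 ↦ Η and 𝐓 ↦ 0, where Ξ = −2ξ∂_ξ, Η = −2ξ∂_η are the orthonormal frame on 𝓛 with coordinate ζ = ξ + iη. -/
/-- The Korányi map α(z,t) = −|z|² + it. -/
noncomputable def Amap (p : ℂ × ℝ) : ℂ :=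
  (-(‖p.1‖ ^ 2 : ℝ) : ℂ) + (p.2 : ℂ) * Complex.I

/-- 𝐓 = x∂_y − y∂_x, tangent value (iz, 0). -/
noncomputable def Tb (p : ℂ × ℝ) : ℂ × ℝ := (Complex.I * p.1, 0)

open Complex ContinuousLinearMap in
theorem Amap_hasFDerivAt (p : ℂ × ℝ) :
    HasFDerivAt Amap
      ((Complex.ofRealCLM.comp
          (-(p.1.re • (Complex.reCLM.comp (fst ℝ ℂ ℝ)) + p.1.re • (Complex.reCLM.comp (fst ℝ ℂ ℝ))
            + (p.1.im • (Complex.imCLM.comp (fst ℝ ℂ ℝ)) + p.1.im • (Complex.imCLM.comp (fst ℝ ℂ ℝ)))))) +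
        ((Complex.ofRealCLM.comp (snd ℝ ℂ ℝ)).smulRight Complex.I)) p := by
  have hre : HasFDerivAt (fun q : ℂ × ℝ => q.1.re) (Complex.reCLM.comp (fst ℝ ℂ ℝ)) p :=
    (Complex.reCLM.hasFDerivAt).comp p (hasFDerivAt_fst)
  have him : HasFDerivAt (fun q : ℂ × ℝ => q.1.im) (Complex.imCLM.comp (fst ℝ ℂ ℝ)) p :=
    (Complex.imCLM.hasFDerivAt).comp p (hasFDerivAt_fst)
  have hns : HasFDerivAt (fun q : ℂ × ℝ => (q.1.re * q.1.re + q.1.im * q.1.im : ℝ))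
      (p.1.re • (Complex.reCLM.comp (fst ℝ ℂ ℝ)) + p.1.re • (Complex.reCLM.comp (fst ℝ ℂ ℝ))
        + (p.1.im • (Complex.imCLM.comp (fst ℝ ℂ ℝ)) + p.1.im • (Complex.imCLM.comp (fst ℝ ℂ ℝ)))) p :=
    (hre.mul hre).add (him.mul him)
  have h1 : HasFDerivAt (fun q : ℂ × ℝ => ((-(q.1.re * q.1.re + q.1.im * q.1.im) : ℝ) : ℂ))
      (Complex.ofRealCLM.comp
        (-(p.1.re • (Complex.reCLM.comp (fst ℝ ℂ ℝ)) + p.1.re • (Complex.reCLM.comp (fst ℝ ℂ ℝ))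
          + (p.1.im • (Complex.imCLM.comp (fst ℝ ℂ ℝ)) + p.1.im • (Complex.imCLM.comp (fst ℝ ℂ ℝ)))))) p :=
    Complex.ofRealCLM.hasFDerivAt.comp p hns.neg
  have h2 : HasFDerivAt (fun q : ℂ × ℝ => (q.2 : ℂ) * Complex.I)
      ((Complex.ofRealCLM.comp (snd ℝ ℂ ℝ)).smulRight Complex.I) p := by
    have := (Complex.ofRealCLM.hasFDerivAt.comp p (hasFDerivAt_snd (𝕜 := ℝ) (p := p))).mul_const Complex.I
    refine this.congr_fderiv ?_
    ext u <;> simp [smul_eq_mul]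
  have heq : Amap = fun q : ℂ × ℝ =>
      ((-(q.1.re * q.1.re + q.1.im * q.1.im) : ℝ) : ℂ) + (q.2 : ℂ) * Complex.I := by
    funext q
    simp only [Amap]
    rw [Complex.sq_norm, Complex.normSq_apply]
    push_cast
    ring
  rw [heq]
  exact h1.add h2


/-- The Korányi map α sends ℂ* × ℝ into the left half-plane 𝓛 = {Re ζ < 0} and
pulls back the hyperbolic metric g_h = |dζ|²/(4 Re(ζ)²) to the sub-Riemannian
tensor g*_cc = ((d(|z|²))² + dt²)/(4|z|⁴): for every tangent vector u = (v,τ),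
|dα_p(u)|²/(4 Re(α p)²) = ((2 Re(z̄ v))² + τ²)/(4|z|⁴); moreover dα kills the
Reeb direction 𝐓. -/
theorem stmt_11 :
    ∀ p : ℂ × ℝ, p.1 ≠ 0 →
      (Amap p).re < 0 ∧
      (∀ u : ℂ × ℝ,
        ‖fderiv ℝ Amap p u‖ ^ 2 / (4 * (Amap p).re ^ 2) =
          ((2 * (star p.1 * u.1).re) ^ 2 + u.2 ^ 2) / (4 * ‖p.1‖ ^ 4)) ∧
      fderiv ℝ Amap p (Tb p) = 0 := by
  intro p hp
  have hD := (Amap_hasFDerivAt p).fderiv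
  have hpos : 0 < ‖p.1‖ := norm_pos_iff.mpr hp
  refine ⟨?_, ?_, ?_⟩
  · simp only [Amap, Complex.add_re, Complex.neg_re, Complex.ofReal_re, Complex.mul_re,
      Complex.ofReal_im, Complex.I_re, Complex.I_im]
    nlinarith
  · intro u
    have hden : 4 * (Amap p).re ^ 2 = 4 * ‖p.1‖ ^ 4 := by
      simp only [Amap, Complex.add_re, Complex.neg_re, Complex.ofReal_re, Complex.mul_re,
        Complex.ofReal_im, Complex.I_re, Complex.I_im]
      ring
    rw [hden]
    congr 1
    rw [hD]
    simp only [ContinuousLinearMap.add_apply, ContinuousLinearMap.comp_apply,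
      ContinuousLinearMap.neg_apply, ContinuousLinearMap.smul_apply,
      ContinuousLinearMap.smulRight_apply, ContinuousLinearMap.coe_fst',
      ContinuousLinearMap.coe_snd', Complex.ofRealCLM_apply, Complex.reCLM_apply,
      Complex.imCLM_apply, smul_eq_mul, Complex.real_smul]
    rw [Complex.sq_norm, Complex.normSq_apply]
    simp [Complex.mul_re, Complex.mul_im, Complex.star_def, Complex.conj_re, Complex.conj_im]
    ring
  · rw [hD]
    simp only [Tb, ContinuousLinearMap.add_apply, ContinuousLinearMap.comp_apply,
      ContinuousLinearMap.neg_apply, ContinuousLinearMap.smul_apply,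
      ContinuousLinearMap.smulRight_apply, ContinuousLinearMap.coe_fst',
      ContinuousLinearMap.coe_snd', Complex.ofRealCLM_apply, Complex.reCLM_apply,
      Complex.imCLM_apply, smul_eq_mul, Complex.real_smul, Complex.mul_re, Complex.mul_im,
      Complex.I_re, Complex.I_im]
    ring_nf
    simp
end

section
/- For a smooth curve γ(s) = (z(s), t(s)) in ℂ* × ℝ, γ is horizontal (i.e., ⟨γ̇, 𝐓⟩ = 0, equivalently ṫ(s) = −2 Im(conj(z(s)) ż(s))) and in that case the horizontal length ∫ₐᵇ |ż(s)|/|z(s)| ds equals the hyperbolic length of the curve α∘γ in the left half-plane 𝓛, where α(z,t) = −|z|²+it and hyperbolic length of a curve ζ(s) in 𝓛 is ∫ |ζ̇(s)|/(−2 Re ζ(s)) ds. -/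
/-- For a smooth horizontal curve γ(s) = (z(s),t(s)) in ℂ* × ℝ (i.e. with
ṫ = −2 Im(z̄ ż)), the horizontal length ∫ₐᵇ |ż|/|z| ds equals the hyperbolic
length ∫ₐᵇ |d(α∘γ)/ds| / (−2 Re(α∘γ)) ds of α∘γ in 𝓛 = {Re ζ < 0}. -/
theorem stmt_12 :
    ∀ (a b : ℝ) (z : ℝ → ℂ) (t : ℝ → ℝ),
      a ≤ b →
      (∀ s, z s ≠ 0) →
      ContDiff ℝ 1 z → ContDiff ℝ 1 t →
      (∀ s, deriv t s = -2 * (star (z s) * deriv z s).im) →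
      (∫ s in a..b, ‖deriv z s‖ / ‖z s‖) =
        ∫ s in a..b,
          ‖deriv (fun u => Amap (z u, t u)) s‖ /
            (-2 * (Amap (z s, t s)).re) := by
  intro a b z t hab hz0 hcz hct hhor
  apply intervalIntegral.integral_congr
  intro s _
  have hz : HasDerivAt z (deriv z s) s :=
    ((hcz.differentiable one_ne_zero) s).hasDerivAt
  have ht : HasDerivAt t (deriv t s) s :=
    ((hct.differentiable one_ne_zero) s).hasDerivAt
  set z' := deriv z s with hz'
  -- real and imaginary parts of z
  have hre : HasDerivAt (fun u => (z u).re) z'.re s :=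
    (Complex.reCLM.hasFDerivAt.comp_hasDerivAt s hz)
  have him : HasDerivAt (fun u => (z u).im) z'.im s :=
    (Complex.imCLM.hasFDerivAt.comp_hasDerivAt s hz)
  -- derivative of normSq (z u)
  have hnsq : HasDerivAt (fun u => Complex.normSq (z u))
      ((z s).re * z'.re + (z s).im * z'.im
        + ((z s).re * z'.re + (z s).im * z'.im)) s := by
    have h := (hre.mul hre).add (him.mul him)
    have heq : (fun u => Complex.normSq (z u))
        = fun u => (z u).re * (z u).re + (z u).im * (z u).im := by
      funext u; simp [Complex.normSq_apply]
    rw [heq]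
    exact h.congr_deriv (by ring)
  have hA : HasDerivAt (fun u => Amap (z u, t u))
      (-2 * ((starRingEnd ℂ) (z s) * z')) s := by
    have h1 : HasDerivAt (fun u => ((Complex.normSq (z u) : ℝ) : ℂ))
        (((z s).re * z'.re + (z s).im * z'.im
          + ((z s).re * z'.re + (z s).im * z'.im) : ℝ) : ℂ) s :=
      hnsq.ofReal_comp
    have h2 : HasDerivAt (fun u => ((t u : ℝ) : ℂ) * Complex.I)
        (((deriv t s : ℝ) : ℂ) * Complex.I) s :=
      ht.ofReal_comp.mul_const Complex.I
    have h3 := (h1.neg).add h2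
    have heq : (fun u => Amap (z u, t u))
        = fun u => -((Complex.normSq (z u) : ℝ) : ℂ) + ((t u : ℝ) : ℂ) * Complex.I := by
      funext u
      simp [Amap, Complex.sq_norm]
    rw [heq]
    refine h3.congr_deriv ?_
    have hts := hhor s
    apply Complex.ext <;>
      simp [hts, hz', Complex.normSq_apply] <;> ring
  show ‖deriv z s‖ / ‖z s‖
      = ‖deriv (fun u => Amap (z u, t u)) s‖ / (-2 * (Amap (z s, t s)).re)
  rw [hA.deriv]
  have habs : ‖-2 * ((starRingEnd ℂ) (z s) * z')‖
      = 2 * (‖z s‖ * ‖z'‖) := by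
    simp [map_mul, Complex.norm_conj]
  have hre2 : (Amap (z s, t s)).re = -(‖z s‖) ^ 2 := by
    simp [Amap, ← Complex.ofReal_pow]
  rw [habs, hre2]
  have hz0s : ‖z s‖ ≠ 0 := by
    simpa using hz0 s
  field_simp
  ring
end

section
/- For k > −1 and k' ∈ ℝ, define f : 𝓛 → 𝓛 in polar coordinates ζ = r e^{iθ} (with θ ∈ (π/2, 3π/2), Re ζ < 0) by f(ζ) = |ζ|^{k+1} e^{i·arctan(tan θ/(k+1) + k')} (appropriately branched so Re f < 0). Then f satisfies the symplectic condition Re(f(ζ))² = Re(ζ)² J_f(ζ), where J_f(ζ) = (1+k)(1+g'(θ))|ζ|^{2k} with g(θ) = arctan(tan θ/(k+1) + k') − θ. -/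
/-- The spiral-stretch map f(ζ) = |ζ|^{k+1} e^{i arctan(tan θ/(k+1) + k')},
branched so that Re f < 0 (here tan θ = Im ζ / Re ζ on 𝓛 = {Re ζ < 0}). -/
noncomputable def spiralStretch (k k' : ℝ) (w : ℂ) : ℂ :=
  -(((‖w‖ ^ (k + 1) : ℝ)) : ℂ) *
    Complex.exp (Complex.I * ((Real.arctan (w.im / w.re / (k + 1) + k') : ℝ) : ℂ))

/-- For k > −1 the spiral-stretch map satisfies Re f < 0 on 𝓛 and the symplectic
condition Re(f ζ)² = Re(ζ)² J_f(ζ), with J_f(ζ) = (1+k)(1+g'(θ))|ζ|^{2k} where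
g(θ) = arctan(tan θ/(k+1) + k') − θ, so that
g'(θ) = (k+1)(1+tan²θ)/((k+1)² + (tan θ + k'(k+1))²) − 1. -/
theorem stmt_18 :
    ∀ k k' : ℝ, -1 < k →
      ∀ ζ : ℂ, ζ.re < 0 →
        (spiralStretch k k' ζ).re < 0 ∧
        (spiralStretch k k' ζ).re ^ 2 =
          ζ.re ^ 2 * ((1 + k) *
            (1 + ((k + 1) * (1 + (ζ.im / ζ.re) ^ 2) /
              ((k + 1) ^ 2 + (ζ.im / ζ.re + k' * (k + 1)) ^ 2) - 1)) *
            (‖ζ‖) ^ (2 * k)) := by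
  intro k k' hk ζ hre
  have hk1 : (0:ℝ) < k + 1 := by linarith
  have hre0 : ζ.re ≠ 0 := ne_of_lt hre
  have habs : 0 < ‖ζ‖ := by
    rw [norm_pos_iff]; intro h0; rw [h0] at hre; simp at hre
  set x : ℝ := ζ.im / ζ.re / (k + 1) + k' with hx
  set c : ℝ := ‖ζ‖ ^ (k+1) with hc
  have hcre : (spiralStretch k k' ζ).re = -(c * Real.cos (Real.arctan x)) := by
    rw [spiralStretch, mul_comm Complex.I,
      show -((c:ℝ):ℂ) = ((-c:ℝ):ℂ) by push_cast; ring,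
      Complex.re_ofReal_mul, Complex.exp_ofReal_mul_I_re]
    ring
  have hcpos : 0 < c := Real.rpow_pos_of_pos habs _
  have hcospos : 0 < Real.cos (Real.arctan x) := Real.cos_arctan_pos x
  have h1x : (0:ℝ) < 1 + x^2 := by positivity
  have hcos2 : Real.cos (Real.arctan x) ^ 2 = 1 / (1 + x^2) := by
    rw [Real.cos_arctan, div_pow, one_pow, Real.sq_sqrt h1x.le]
  have hc2 : c ^ 2 = ‖ζ‖ ^ (2*k) * (ζ.re^2 + ζ.im^2) := by
    have h1 : c ^ 2 = ‖ζ‖ ^ ((2:ℝ)*k) * ‖ζ‖ ^ (2:ℕ) := by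
      rw [hc, ← Real.rpow_natCast (‖ζ‖ ^ (k+1)) 2, ← Real.rpow_natCast (‖ζ‖) 2,
        ← Real.rpow_mul habs.le, ← Real.rpow_add habs]
      norm_num; ring_nf
    rw [h1, Complex.sq_norm, Complex.normSq_apply]; ring
  have hD : (k+1)^2 + (ζ.im/ζ.re + k'*(k+1))^2 = (k+1)^2*(1+x^2) := by
    rw [hx]; field_simp
  constructor
  · rw [hcre]; nlinarith
  · rw [hcre, hD, neg_pow, neg_one_sq, one_mul, mul_pow, hcos2, hc2]
    have hk1' : (k+1:ℝ) ≠ 0 := ne_of_gt hk1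
    field_simp
    ring
end
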